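/- arXiv:0711.0085 — 4 statements merged into one kernel-verified Lean document; each statement's English description precedes it below -/
import Mathlib

section
/- Let 0 < q < 1 (real), h a positive integer, ξ a root of unity with |ξ q^h| < 1, x > 0 real, and define the twisted (h,q)-Hurwitz zeta function ζ_{ξ,q}^{(h)}(s,x) = Σ_{n≥0} ξ^n q^{nh}/(n+x)^s − (h log q)/(s−1) · Σ_{n≥0} ξ^n q^{nh}/(n+x)^{s−1}. Then for every positive integer n, the analytic continuation satisfies ζ_{ξ,q}^{(h)}(1−n, x) = −B_{n,ξ}^{(h)}(x,q)/n, where B_{n,ξ}^{(h)}(x,q) are the twisted (h,q)-Bernoulli polynomials defined by (t + log q^h) e^{tx}/(ξ q^h e^t − 1) = Σ B_{n,ξ}^{(h)}(x,q) t^n/n!. -/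
open Finset

private lemma aux_summable' (z : ℂ) (hz : ‖z‖ < 1) (x : ℂ) (n : ℕ) :
    Summable (fun m : ℕ => z ^ m * ((m : ℂ) + x) ^ n) := by
  have : (fun m : ℕ => z ^ m * ((m : ℂ) + x) ^ n)
      = fun m : ℕ => ∑ k ∈ range (n + 1),
        (x ^ (n - k) * (n.choose k : ℂ)) * ((m : ℂ) ^ k * z ^ m) := by
    funext m
    rw [add_pow, Finset.mul_sum]
    congr 1; funext k; ring
  rw [this]
  apply summable_sum
  intro k _
  exact (summable_pow_mul_geometric_of_norm_lt_one k hz).mul_left _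

private lemma keyA' (z : ℂ) (hz : ‖z‖ < 1) (x : ℂ) (n : ℕ) :
    z * ∑ j ∈ range (n + 1),
        (n.choose j : ℂ) * ∑' m : ℕ, z ^ m * ((m : ℂ) + x) ^ j
      = (∑' m : ℕ, z ^ m * ((m : ℂ) + x) ^ n) - x ^ n := by
  have h1 : ∑ j ∈ range (n + 1), (n.choose j : ℂ) * ∑' m : ℕ, z ^ m * ((m : ℂ) + x) ^ j
      = ∑' m : ℕ, z ^ m * (((m : ℂ) + x) + 1) ^ n := by
    simp only [← tsum_mul_left]
    rw [← Summable.tsum_finsetSum (fun j (_ : j ∈ range (n+1)) =>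
      ((aux_summable' z hz x j).mul_left (n.choose j : ℂ)))]
    congr 1; funext m
    rw [add_pow, Finset.mul_sum]
    congr 1; funext j; ring
  rw [h1]
  have h2 : (∑' m : ℕ, z ^ m * ((m : ℂ) + x) ^ n)
      = x ^ n + ∑' m : ℕ, z ^ (m + 1) * (((m : ℕ) + 1 : ℂ) + x) ^ n := by
    rw [Summable.tsum_eq_zero_add (aux_summable' z hz x n)]
    simp
  rw [h2, ← tsum_mul_left]
  have h3 : ∑' m : ℕ, z * (z ^ m * (((m : ℂ) + x) + 1) ^ n)
      = ∑' m : ℕ, z ^ (m + 1) * (((m : ℕ) + 1 : ℂ) + x) ^ n := by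
    congr 1; funext m; push_cast; ring
  rw [h3]; ring

private lemma conv_sum' (g : ℕ → ℂ) (n : ℕ) :
    ∑ p ∈ Finset.HasAntidiagonal.antidiagonal n, (1 / (p.1.factorial : ℂ)) * (g p.2 / (p.2.factorial : ℂ))
      = (∑ j ∈ range (n + 1), (n.choose j : ℂ) * g j) / (n.factorial : ℂ) := by
  rw [Finset.Nat.sum_antidiagonal_eq_sum_range_succ_mk, ← Finset.sum_range_reflect,
    Finset.sum_div]
  apply Finset.sum_congr rfl
  intro j hj
  have hj' : j ≤ n := Nat.lt_succ_iff.mp (mem_range.mp hj)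
  have h1 : n - (n - j) = j := Nat.sub_sub_self hj'
  simp only [Nat.succ_sub_one, h1]
  rw [Nat.cast_choose ℂ hj']
  have h2 : (j.factorial : ℂ) ≠ 0 := Nat.cast_ne_zero.mpr j.factorial_ne_zero
  have h3 : ((n - j).factorial : ℂ) ≠ 0 := Nat.cast_ne_zero.mpr (n - j).factorial_ne_zero
  have h4 : (n.factorial : ℂ) ≠ 0 := Nat.cast_ne_zero.mpr n.factorial_ne_zero
  field_simp

private lemma Tseries' (z x c : ℂ) (S : ℕ → ℂ)
    (hS : ∀ n : ℕ, z * ∑ j ∈ range (n + 1), (n.choose j : ℂ) * S j = S n - x ^ n) :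
    (PowerSeries.X + PowerSeries.C (R := ℂ) c) * PowerSeries.rescale x (PowerSeries.exp ℂ) =
      (PowerSeries.C (R := ℂ) z * PowerSeries.exp ℂ - 1) *
        PowerSeries.mk (fun k => (-((k : ℂ) * S (k - 1) + c * S k)) / (k.factorial : ℂ)) := by
  have hcoeff : ∀ m : ℕ, (PowerSeries.coeff (R := ℂ) m) (PowerSeries.exp ℂ) = 1 / (m.factorial : ℂ) := by
    intro m
    rw [PowerSeries.coeff_exp]
    push_cast [map_div₀, map_one, map_natCast]
    rfl
  have hfac : ∀ m : ℕ, ((m.factorial : ℂ)) ≠ 0 :=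
    fun m => Nat.cast_ne_zero.mpr m.factorial_ne_zero
  apply PowerSeries.ext
  intro n
  conv_lhs => rw [add_mul, map_add, PowerSeries.coeff_C_mul, PowerSeries.coeff_rescale, hcoeff]
  conv_rhs => rw [sub_mul, one_mul, map_sub, mul_assoc, PowerSeries.coeff_C_mul,
    PowerSeries.coeff_mul, PowerSeries.coeff_mk]
  simp only [hcoeff, PowerSeries.coeff_mk]
  rw [conv_sum' (fun j => -((j:ℂ) * S (j-1) + c * S j)) n]
  cases n with
  | zero =>
    have E1 : z * S 0 = S 0 - 1 := by simpa using hS 0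
    simp only [PowerSeries.coeff_zero_X_mul, Nat.factorial_zero, Nat.cast_one, Nat.cast_zero,
      pow_zero, zero_add, range_one, sum_singleton, Nat.choose_self, one_mul,
      zero_mul, div_one, mul_one]
    linear_combination c * E1
  | succ k =>
    rw [PowerSeries.coeff_succ_X_mul, PowerSeries.coeff_rescale, hcoeff]
    have E1 := hS (k + 1)
    have E2 : z * ∑ j ∈ range (k + 2), ((k + 1).choose j : ℂ) * ((j : ℂ) * S (j - 1))
        = ((k : ℂ) + 1) * (S k - x ^ k) := by
      have hre : ∑ j ∈ range (k + 2), ((k + 1).choose j : ℂ) * ((j : ℂ) * S (j - 1))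
          = ((k : ℂ) + 1) * ∑ j ∈ range (k + 1), (k.choose j : ℂ) * S j := by
        rw [Finset.sum_range_succ']
        simp only [Nat.cast_zero, zero_mul, mul_zero, add_zero]
        rw [Finset.mul_sum]
        apply Finset.sum_congr rfl
        intro j hj
        have h3 : ((k + 1).choose (j + 1) * (j + 1) : ℕ) = ((k + 1) * k.choose j : ℕ) :=
          (Nat.add_one_mul_choose_eq k j).symm
        have h4 : ((k + 1).choose (j + 1) : ℂ) * ((j : ℂ) + 1) = ((k : ℂ) + 1) * (k.choose j : ℂ) := by
          exact_mod_cast h3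
        simp only [Nat.add_sub_cancel]
        push_cast
        linear_combination S j * h4
      rw [hre, ← mul_assoc, mul_comm z ((k:ℂ)+1), mul_assoc, hS k]
    have hs2 : ∑ j ∈ range (k + 2), ((k + 1).choose j : ℂ) * (-((j : ℂ) * S (j - 1) + c * S j))
        = -(∑ j ∈ range (k + 2), ((k + 1).choose j : ℂ) * ((j : ℂ) * S (j - 1))
            + c * ∑ j ∈ range (k + 2), ((k + 1).choose j : ℂ) * S j) := by
      rw [Finset.mul_sum, ← Finset.sum_add_distrib, ← Finset.sum_neg_distrib]
      apply Finset.sum_congr rfl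
      intro j _
      ring
    rw [hs2]
    have hfs : (((k + 1).factorial : ℂ)) = ((k : ℂ) + 1) * (k.factorial : ℂ) := by
      rw [Nat.factorial_succ]; push_cast; ring
    simp only [Nat.add_sub_cancel]
    push_cast at E1 ⊢
    field_simp [hfac k, hfac (k + 1)]
    rw [show (∑ j ∈ range (k + 2), ((k + 1).choose j : ℂ) * ((j : ℂ) * S (j - 1)))
        = ∑ j ∈ range (k + 2), ((k + 1).choose j : ℂ) * (j : ℂ) * S (j - 1) from
      Finset.sum_congr rfl fun j _ => (mul_assoc _ _ _).symm] at E2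
    linear_combination c * (k.factorial : ℂ) * E1
      + (k.factorial : ℂ) * E2
      + x ^ k * hfs



/-- The twisted (h,q)-Hurwitz zeta function
`ζ_{ξ,q}^{(h)}(s,x) = Σ_{n≥0} ξ^n q^{nh}/(n+x)^s − (h log q)/(s−1) Σ_{n≥0} ξ^n q^{nh}/(n+x)^{s−1}`
(the defining series converges for all `s` since `|q| < 1`) satisfies
`ζ_{ξ,q}^{(h)}(1−n, x) = −B_{n,ξ}^{(h)}(x,q)/n` for every positive integer `n`,
where the twisted (h,q)-Bernoulli polynomials are defined by the EGF
`(t + log q^h) e^{tx}/(ξ q^h e^t − 1) = Σ B_n(x) t^n/n!`. -/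
theorem twisted_hq_hurwitz_zeta_at_neg_integers
    (h : ℕ) (hh : 0 < h) (q : ℝ) (hq0 : 0 < q) (hq1 : q < 1)
    (ξ : ℂ) (hroot : ∃ m : ℕ, 0 < m ∧ ξ ^ m = 1) (x : ℝ) (hx : 0 < x)
    (B : ℂ → ℕ → ℂ)
    (hB : ∀ z : ℂ,
      (PowerSeries.X + PowerSeries.C (R := ℂ) (Complex.log ((q : ℂ) ^ h))) *
          PowerSeries.rescale z (PowerSeries.exp ℂ) =
        (PowerSeries.C (R := ℂ) (ξ * (q : ℂ) ^ h) * PowerSeries.exp ℂ - 1) *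
          PowerSeries.mk (fun n => B z n / (n.factorial : ℂ)))
    (n : ℕ) (hn : 1 ≤ n) :
    (∑' m : ℕ, ξ ^ m * (q : ℂ) ^ (m * h) / (((m : ℂ) + (x : ℂ)) ^ ((1 : ℂ) - n))) -
      ((h : ℂ) * (Real.log q : ℂ)) / (((1 : ℂ) - n) - 1) *
        ∑' m : ℕ, ξ ^ m * (q : ℂ) ^ (m * h) / (((m : ℂ) + (x : ℂ)) ^ (((1 : ℂ) - n) - 1)) =
      - B (x : ℂ) n / (n : ℂ) := by
  set z : ℂ := ξ * (q : ℂ) ^ h with hzdef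
  set c : ℂ := Complex.log ((q : ℂ) ^ h) with hcdef
  -- ‖z‖ < 1
  obtain ⟨m₀, hm₀, hξ⟩ := hroot
  have hξ1 : ‖ξ‖ = 1 := by
    have h2 : ‖ξ‖ ^ m₀ = 1 := by rw [← norm_pow, hξ, norm_one]
    rcases (pow_eq_one_iff_of_ne_zero hm₀.ne').mp h2 with h' | ⟨h', _⟩
    · exact h'
    · nlinarith [norm_nonneg ξ]
  have hz : ‖z‖ < 1 := by
    rw [hzdef, norm_mul, hξ1, one_mul, norm_pow, Complex.norm_real,
      Real.norm_of_nonneg hq0.le]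
    exact pow_lt_one₀ hq0.le hq1 hh.ne'
  -- c = h * log q
  have hc : c = ((h : ℂ) * (Real.log q : ℂ)) := by
    rw [hcdef, ← Complex.ofReal_pow, ← Complex.ofReal_log (le_of_lt (pow_pos hq0 h)),
      Real.log_pow]
    push_cast
    rfl
  -- the series
  set S : ℕ → ℂ := fun j => ∑' m : ℕ, z ^ m * ((m : ℂ) + (x : ℂ)) ^ j with hSdef
  have hS : ∀ k : ℕ, z * ∑ j ∈ range (k + 1), (k.choose j : ℂ) * S j = S k - (x : ℂ) ^ k :=
    fun k => keyA' z hz (x : ℂ) k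
  -- identify B with the series formula
  have hne : (PowerSeries.C (R := ℂ) z * PowerSeries.exp ℂ - 1) ≠ 0 := by
    intro h0
    have h1 := congrArg (PowerSeries.constantCoeff (R := ℂ)) h0
    simp only [map_sub, map_mul, PowerSeries.constantCoeff_C, PowerSeries.constantCoeff_exp,
      mul_one, map_one, map_zero] at h1
    have hz1 : z = 1 := sub_eq_zero.mp h1
    rw [hz1] at hz
    simp at hz
  have hBT : PowerSeries.mk (fun k => B (x : ℂ) k / (k.factorial : ℂ))
      = PowerSeries.mk (fun k => (-((k : ℂ) * S (k - 1) + c * S k)) / (k.factorial : ℂ)) := by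
    apply mul_left_cancel₀ hne
    rw [← hB (x : ℂ), ← Tseries' z (x : ℂ) c S hS]
  have hBn : B (x : ℂ) n = -((n : ℂ) * S (n - 1) + c * S n) := by
    have h1 := congrArg (PowerSeries.coeff (R := ℂ) n) hBT
    rw [PowerSeries.coeff_mk, PowerSeries.coeff_mk] at h1
    have h2 : ((n.factorial : ℂ)) ≠ 0 := Nat.cast_ne_zero.mpr n.factorial_ne_zero
    field_simp at h1
    linear_combination h1
  -- rewrite the two tsums
  have hw : ∀ m : ℕ, ((m : ℂ) + (x : ℂ)) ≠ 0 := by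
    intro m
    have h1 : (0:ℝ) < (m : ℝ) + x := by positivity
    have := h1.ne'
    intro hcon
    apply this
    have : (((m : ℝ) + x : ℝ) : ℂ) = 0 := by push_cast; push_cast at hcon; exact hcon
    exact_mod_cast this
  have hnum : ∀ m : ℕ, ξ ^ m * (q : ℂ) ^ (m * h) = z ^ m := by
    intro m
    rw [hzdef, mul_pow, pow_mul]
    ring
  have ht1 : (∑' m : ℕ, ξ ^ m * (q : ℂ) ^ (m * h) / (((m : ℂ) + (x : ℂ)) ^ ((1 : ℂ) - n)))
      = S (n - 1) := by
    rw [hSdef]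
    congr 1; funext m
    rw [hnum m]
    have h1 : ((1 : ℂ) - n) = ((1 - (n:ℤ) : ℤ) : ℂ) := by push_cast; ring
    rw [h1, Complex.cpow_intCast, div_eq_mul_inv, ← zpow_neg]
    congr 1
    have h2 : -(1 - (n:ℤ)) = ((n - 1 : ℕ) : ℤ) := by omega
    rw [h2, zpow_natCast]
  have ht2 : (∑' m : ℕ, ξ ^ m * (q : ℂ) ^ (m * h) / (((m : ℂ) + (x : ℂ)) ^ (((1 : ℂ) - n) - 1)))
      = S n := by
    rw [hSdef]
    congr 1; funext m
    rw [hnum m]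
    have h1 : (((1 : ℂ) - n) - 1) = ((-(n:ℤ) : ℤ) : ℂ) := by push_cast; ring
    rw [h1, Complex.cpow_intCast, div_eq_mul_inv, ← zpow_neg]
    congr 1
    rw [neg_neg, zpow_natCast]
  rw [ht1, ht2, hBn, ← hc]
  have hn0 : ((n : ℂ)) ≠ 0 := Nat.cast_ne_zero.mpr (by omega)
  have h3 : (((1 : ℂ) - n) - 1) = -(n : ℂ) := by ring
  rw [h3]
  field_simp [hn0]
  ring
end

section
/- Let χ be a Dirichlet character of conductor f, ξ a root of unity, h a positive integer, and define the generalized twisted (h,q)-Bernoulli polynomials B_{n,χ,ξ}^{(h)}(z,q) by Σ_{a=1}^{f} χ(a) ξ^a q^{ha} e^{(z+a)t} (t + log q^h)/(ξ^f q^{hf} e^{ft} − 1) = Σ_{n≥0} B_{n,χ,ξ}^{(h)}(z,q) t^n/n!. Then for every positive integer n: B_{n,χ,ξ}^{(h)}(z,q) = f^{n−1} Σ_{a=1}^{f} χ(a) ξ^a q^{ha} B_{n,ξ^f}^{(h)}((a+z)/f, q^f), where B_{n,ξ}^{(h)}(x,q) is the twisted (h,q)-Bernoulli polynomial with generating function (t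 + log q^h) e^{tx}/(ξ q^h e^t − 1). -/
open PowerSeries

lemma rescale_C_aux {R : Type*} [CommRing R] (a b : R) :
    PowerSeries.rescale a (PowerSeries.C b) = PowerSeries.C b := by
  ext n
  rw [PowerSeries.coeff_rescale]
  cases n with
  | zero => simp
  | succ n => simp [PowerSeries.coeff_C]

/-- The generalized twisted (h,q)-Bernoulli polynomials attached to a
Dirichlet character `χ` mod `f`, defined by the EGF
`Σ_{a=1}^f χ(a) ξ^a q^{ha} e^{(z+a)t}(t + log q^h)/(ξ^f q^{hf} e^{ft} − 1) = Σ B_{n,χ}(z) t^n/n!`,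
satisfy the distribution relation
`B_{n,χ,ξ}^{(h)}(z,q) = f^{n−1} Σ_{a=1}^f χ(a) ξ^a q^{ha} B_{n,ξ^f}^{(h)}((a+z)/f, q^f)`,
where `B_{n,ξ^f}^{(h)}(x,q^f)` has EGF `(t + log(q^{fh})) e^{tx}/(ξ^f q^{fh} e^t − 1)`. -/
theorem generalized_twisted_hq_bernoulli_distribution
    (h f : ℕ) (hh : 0 < h) (hf : 0 < f) (q : ℝ) (hq0 : 0 < q)
    (ξ : ℂ) (hξq : ξ ^ f * (q : ℂ) ^ (h * f) ≠ 1)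
    (χ : DirichletCharacter ℂ f) (Bχ : ℂ → ℕ → ℂ) (Bf : ℂ → ℕ → ℂ)
    (hBχ : ∀ z : ℂ,
      (PowerSeries.X + PowerSeries.C (Complex.log ((q : ℂ) ^ h))) *
          (∑ a ∈ Finset.Icc 1 f,
            PowerSeries.C (χ ((a : ℕ) : ZMod f) * ξ ^ a * (q : ℂ) ^ (h * a)) *
              PowerSeries.rescale (z + (a : ℂ)) (PowerSeries.exp ℂ)) =
        (PowerSeries.C (ξ ^ f * (q : ℂ) ^ (h * f)) *
            PowerSeries.rescale (f : ℂ) (PowerSeries.exp ℂ) - 1) *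
          PowerSeries.mk (fun n => Bχ z n / (n.factorial : ℂ)))
    (hBf : ∀ x : ℂ,
      (PowerSeries.X + PowerSeries.C (Complex.log ((q : ℂ) ^ (f * h)))) *
          PowerSeries.rescale x (PowerSeries.exp ℂ) =
        (PowerSeries.C (ξ ^ f * (q : ℂ) ^ (h * f)) * PowerSeries.exp ℂ - 1) *
          PowerSeries.mk (fun n => Bf x n / (n.factorial : ℂ))) :
    ∀ (z : ℂ) (n : ℕ), 1 ≤ n →
      Bχ z n = (f : ℂ) ^ (n - 1) * ∑ a ∈ Finset.Icc 1 f,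
        χ ((a : ℕ) : ZMod f) * ξ ^ a * (q : ℂ) ^ (h * a) *
          Bf (((a : ℂ) + z) / (f : ℂ)) n := by
  intro z n hn
  have hfc : (f : ℂ) ≠ 0 := Nat.cast_ne_zero.mpr hf.ne'
  -- log identity
  have hlog : Complex.log ((q : ℂ) ^ (f * h)) =
      (f : ℂ) * Complex.log ((q : ℂ) ^ h) := by
    have h1 : ((q : ℂ)) ^ (f * h) = ((q ^ (f * h) : ℝ) : ℂ) := by push_cast; ring
    have h2 : ((q : ℂ)) ^ h = ((q ^ h : ℝ) : ℂ) := by push_cast; ring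
    rw [h1, h2, ← Complex.ofReal_log (le_of_lt (pow_pos hq0 _)),
      ← Complex.ofReal_log (le_of_lt (pow_pos hq0 _)),
      Real.log_pow, Real.log_pow]
    push_cast; ring
  set D : ℂ⟦X⟧ := PowerSeries.C (ξ ^ f * (q : ℂ) ^ (h * f)) *
      PowerSeries.rescale (f : ℂ) (PowerSeries.exp ℂ) - 1 with hD
  -- the rescaled individual equation
  have step : ∀ a : ℕ,
      PowerSeries.C (f : ℂ) *
        ((PowerSeries.X + PowerSeries.C (Complex.log ((q : ℂ) ^ h))) *
          PowerSeries.rescale (z + (a : ℂ)) (PowerSeries.exp ℂ)) =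
      D * PowerSeries.rescale (f : ℂ)
          (PowerSeries.mk (fun m => Bf (((a : ℂ) + z) / (f : ℂ)) m / (m.factorial : ℂ))) := by
    intro a
    have H := congrArg (PowerSeries.rescale (f : ℂ)) (hBf (((a : ℂ) + z) / (f : ℂ)))
    simp only [map_mul, map_add, map_sub, map_one, PowerSeries.rescale_X,
      rescale_C_aux, PowerSeries.rescale_rescale] at H
    rw [div_mul_cancel₀ _ hfc] at H
    have e2 : PowerSeries.C ((f : ℂ) * Complex.log ((q : ℂ) ^ h)) =
        PowerSeries.C (f : ℂ) * PowerSeries.C (Complex.log ((q : ℂ) ^ h)) :=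
      map_mul _ _ _
    rw [hlog, e2] at H
    have hre : (z + (a : ℂ)) = (a : ℂ) + z := by ring
    rw [hD, map_mul, hre]
    linear_combination H
  -- sum them against the character coefficients
  have hsum : D * (PowerSeries.C (f : ℂ) *
        PowerSeries.mk (fun m => Bχ z m / (m.factorial : ℂ))) =
      D * ∑ a ∈ Finset.Icc 1 f,
        PowerSeries.C (χ ((a : ℕ) : ZMod f) * ξ ^ a * (q : ℂ) ^ (h * a)) *
          PowerSeries.rescale (f : ℂ)
            (PowerSeries.mk (fun m => Bf (((a : ℂ) + z) / (f : ℂ)) m / (m.factorial : ℂ))) := by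
    calc D * (PowerSeries.C (f : ℂ) *
          PowerSeries.mk (fun m => Bχ z m / (m.factorial : ℂ)))
        = PowerSeries.C (f : ℂ) *
          (D * PowerSeries.mk (fun m => Bχ z m / (m.factorial : ℂ))) := by ring
      _ = PowerSeries.C (f : ℂ) *
          ((PowerSeries.X + PowerSeries.C (Complex.log ((q : ℂ) ^ h))) *
            ∑ a ∈ Finset.Icc 1 f,
              PowerSeries.C (χ ((a : ℕ) : ZMod f) * ξ ^ a * (q : ℂ) ^ (h * a)) *
                PowerSeries.rescale (z + (a : ℂ)) (PowerSeries.exp ℂ)) := by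
          rw [← hBχ z]
      _ = ∑ a ∈ Finset.Icc 1 f,
          PowerSeries.C (χ ((a : ℕ) : ZMod f) * ξ ^ a * (q : ℂ) ^ (h * a)) *
            (PowerSeries.C (f : ℂ) *
              ((PowerSeries.X + PowerSeries.C (Complex.log ((q : ℂ) ^ h))) *
                PowerSeries.rescale (z + (a : ℂ)) (PowerSeries.exp ℂ))) := by
          rw [Finset.mul_sum, Finset.mul_sum]
          exact Finset.sum_congr rfl fun a _ => by ring
      _ = ∑ a ∈ Finset.Icc 1 f,
          PowerSeries.C (χ ((a : ℕ) : ZMod f) * ξ ^ a * (q : ℂ) ^ (h * a)) *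
            (D * PowerSeries.rescale (f : ℂ)
              (PowerSeries.mk (fun m => Bf (((a : ℂ) + z) / (f : ℂ)) m / (m.factorial : ℂ)))) := by
          exact Finset.sum_congr rfl fun a _ => by rw [step a]
      _ = _ := by
          rw [Finset.mul_sum]
          exact Finset.sum_congr rfl fun a _ => by ring
  -- D is nonzero
  have hDne : D ≠ 0 := by
    intro h0
    have : PowerSeries.constantCoeff D = 0 := by rw [h0]; simp
    rw [hD] at this
    simp only [map_sub, map_mul, PowerSeries.constantCoeff_C, map_one] at this
    have hc : PowerSeries.constantCoeff
        (PowerSeries.rescale (f : ℂ) (PowerSeries.exp ℂ)) = 1 := by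
      rw [← PowerSeries.coeff_zero_eq_constantCoeff, PowerSeries.coeff_rescale]
      simp [PowerSeries.coeff_exp]
    rw [hc, mul_one, sub_eq_zero] at this
    exact hξq this
  have hcancel := mul_left_cancel₀ hDne hsum
  -- extract coefficient n
  have E := congrArg (PowerSeries.coeff n) hcancel
  rw [PowerSeries.coeff_C_mul, PowerSeries.coeff_mk, map_sum] at E
  simp only [PowerSeries.coeff_C_mul, PowerSeries.coeff_rescale, PowerSeries.coeff_mk] at E
  -- finish by algebra
  have hnfac : ((n.factorial : ℂ)) ≠ 0 := Nat.cast_ne_zero.mpr n.factorial_ne_zero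
  have hn' : n - 1 + 1 = n := Nat.succ_pred_eq_of_pos hn
  have E2 : (f : ℂ) * Bχ z n =
      (f : ℂ) * ((f : ℂ) ^ (n - 1) * ∑ a ∈ Finset.Icc 1 f,
        χ ((a : ℕ) : ZMod f) * ξ ^ a * (q : ℂ) ^ (h * a) *
          Bf (((a : ℂ) + z) / (f : ℂ)) n) := by
    calc (f : ℂ) * Bχ z n
        = ((f : ℂ) * (Bχ z n / (n.factorial : ℂ))) * (n.factorial : ℂ) := by
          field_simp
      _ = (∑ a ∈ Finset.Icc 1 f,
            χ ((a : ℕ) : ZMod f) * ξ ^ a * (q : ℂ) ^ (h * a) *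
              ((f : ℂ) ^ n * (Bf (((a : ℂ) + z) / (f : ℂ)) n / (n.factorial : ℂ)))) *
            (n.factorial : ℂ) := by rw [E]
      _ = _ := by
          rw [Finset.sum_mul, Finset.mul_sum, Finset.mul_sum]
          refine Finset.sum_congr rfl fun a _ => ?_
          rw [show (f : ℂ) ^ n = (f : ℂ) * (f : ℂ) ^ (n - 1) by rw [← pow_succ', hn']]
          field_simp
  exact mul_left_cancel₀ hfc E2
end

section
/- Let χ be a Dirichlet character with χ_n = χ w^{−n}, let F be a positive integral multiple of p* and of the conductor of χ_n, and suppose p divides the conductor condition so that χ_n(p) ≠ 0 implies F/p is a multiple of f_{χ_n}. Then B_{n,χ_n,ξ}^{(h)}(p*t, q) − χ_n(p) p^{n−1} B_{n,χ_n,ξ^p}^{(h)}(p^{−1}p*t, q^p) = F^{n−1} Σ_{a=1, p∤a}^{F} χ_n(a) ξ^a q^{ha} B_{n,ξ^F}^{(h)}((a + p*t)/F, q^F). -/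
/-- Let `F = p F'` be a positive multiple of `p` (and of the relevant
conductors), let `χₙ = χ w^{−n}` (given abstractly as a function `χn` satisfying
`χn(p b) = χn(p) χn(b)`), and suppose the generalized twisted (h,q)-Bernoulli polynomials
satisfy the distribution relations
`B_{n,χₙ,ξ}^{(h)}(z,q) = F^{n−1} Σ_{a=1}^F χₙ(a) ξ^a q^{ha} B_{n,ξ^F}^{(h)}((a+z)/F, q^F)` and
`B_{n,χₙ,ξ^p}^{(h)}(z,q^p) = F'^{n−1} Σ_{b=1}^{F'} χₙ(b) (ξ^p)^b (q^p)^{hb} B_{n,ξ^F}^{(h)}((b+z)/F', q^F)`.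
Then
`B_{n,χₙ,ξ}^{(h)}(p*t, q) − χₙ(p) p^{n−1} B_{n,χₙ,ξ^p}^{(h)}(p^{−1}p*t, q^p)
  = F^{n−1} Σ_{a=1, p∤a}^F χₙ(a) ξ^a q^{ha} B_{n,ξ^F}^{(h)}((a + p*t)/F, q^F)`. -/
theorem generalized_bernoulli_p_deleted_distribution
    (p : ℕ) (hp : p.Prime) (h n : ℕ) (hh : 0 < h) (hn : 1 ≤ n)
    (F' : ℕ) (hF' : 0 < F') (F : ℕ) (hF : F = p * F')
    (pstar : ℕ) (hps : pstar = if p = 2 then 4 else p)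
    (q ξ t : ℂ) (χn : ℕ → ℂ)
    (hmult : ∀ b : ℕ, χn (p * b) = χn p * χn b)
    (BF : ℂ → ℂ) (Bχ Bχp : ℂ → ℂ)
    (hBχ : ∀ z : ℂ, Bχ z = (F : ℂ) ^ (n - 1) *
      ∑ a ∈ Finset.Icc 1 F, χn a * ξ ^ a * q ^ (h * a) * BF (((a : ℂ) + z) / (F : ℂ)))
    (hBχp : ∀ z : ℂ, Bχp z = (F' : ℂ) ^ (n - 1) *
      ∑ b ∈ Finset.Icc 1 F', χn b * (ξ ^ p) ^ b * (q ^ p) ^ (h * b) *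
        BF (((b : ℂ) + z) / (F' : ℂ))) :
    Bχ ((pstar : ℂ) * t) - χn p * (p : ℂ) ^ (n - 1) * Bχp ((pstar : ℂ) * t / (p : ℂ)) =
      (F : ℂ) ^ (n - 1) * ∑ a ∈ (Finset.Icc 1 F).filter (fun a => ¬ p ∣ a),
        χn a * ξ ^ a * q ^ (h * a) * BF (((a : ℂ) + (pstar : ℂ) * t) / (F : ℂ)) := by

  have hp0 : (p : ℂ) ≠ 0 := Nat.cast_ne_zero.mpr hp.pos.ne'
  have hF0 : (F' : ℂ) ≠ 0 := Nat.cast_ne_zero.mpr hF'.ne'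
  set z : ℂ := (pstar : ℂ) * t with hz
  have key : ∑ a ∈ (Finset.Icc 1 F).filter (fun a => p ∣ a),
      χn a * ξ ^ a * q ^ (h * a) * BF (((a : ℂ) + z) / (F : ℂ))
      = χn p * ∑ b ∈ Finset.Icc 1 F', χn b * (ξ ^ p) ^ b * (q ^ p) ^ (h * b) *
        BF (((b : ℂ) + z / (p : ℂ)) / (F' : ℂ)) := by
    rw [Finset.mul_sum]
    refine Finset.sum_nbij' (i := fun a => a / p) (j := fun b => p * b) ?_ ?_ ?_ ?_ ?_
    · intro a ha
      simp only [Finset.mem_filter, Finset.mem_Icc] at ha ⊢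
      obtain ⟨⟨h1, h2⟩, c, rfl⟩ := ha
      rw [Nat.mul_div_cancel_left _ hp.pos]
      subst hF
      have := hp.two_le
      constructor
      · rcases Nat.eq_zero_or_pos c with rfl | hc
        · simp at h1
        · exact hc
      · exact Nat.le_of_mul_le_mul_left h2 hp.pos
    · intro b hb
      simp only [Finset.mem_Icc, Finset.mem_filter] at hb ⊢
      subst hF
      exact ⟨⟨le_trans hb.1 (Nat.le_mul_of_pos_left _ hp.pos),
        Nat.mul_le_mul_left p hb.2⟩, ⟨b, rfl⟩⟩
    · intro a ha
      simp only [Finset.mem_filter] at ha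
      exact Nat.mul_div_cancel' ha.2
    · intro b _
      exact Nat.mul_div_cancel_left _ hp.pos
    · intro a ha
      simp only [Finset.mem_filter] at ha
      obtain ⟨c, rfl⟩ := ha.2
      simp only [Nat.mul_div_cancel_left _ hp.pos]
      rw [hmult]
      have harg : ((↑(p * c) : ℂ) + z) / (F : ℂ) = ((c : ℂ) + z / (p : ℂ)) / (F' : ℂ) := by
        subst hF
        push_cast
        field_simp
      rw [harg, show h * (p * c) = p * (h * c) by ring, pow_mul, pow_mul]
      ring
  have hFpow : (F : ℂ) ^ (n - 1) = (p : ℂ) ^ (n - 1) * (F' : ℂ) ^ (n - 1) := by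
    subst hF; push_cast; rw [mul_pow]
  rw [hBχ, hBχp, ← Finset.sum_filter_add_sum_filter_not (Finset.Icc 1 F) (fun a => p ∣ a),
    key, hFpow]
  ring
end

section
/- Define L_{ξ,p,q}^{(h)}(s,t,χ) = (1/((s−1)F)) Σ_{a=1,(a,p)=1}^{F} χ(a) <a+p*t>^{1−s} q^{ha} ξ^a Σ_{k≥0} C(1−s, k) (F/(a+p*t))^k B_{k,ξ^F}^{(h)}(q^F), where F is a positive integral multiple of p* and of f_{χ_n}. Then for every positive integer n: L_{ξ,p,q}^{(h)}(1−n, t, χ) = −(1/n)·(B_{n,χ_n,ξ}^{(h)}(p*t, q) − χ_n(p) p^{n−1} B_{n,χ_n,ξ^p}^{(h)}(p^{−1}p*t, q^p)). -/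
/-- The generalized binomial coefficient `C(z, k) = z(z−1)⋯(z−k+1)/k!` for `z : ℂ`. -/
noncomputable def cchoose (z : ℂ) (k : ℕ) : ℂ :=
  (∏ i ∈ Finset.range k, (z - (i : ℂ))) / (k.factorial : ℂ)

lemma cchoose_nat_of_le {n k : ℕ} (hk : k ≤ n) : cchoose (n : ℂ) k = (n.choose k : ℂ) := by
  unfold cchoose
  have hprod : ∏ i ∈ Finset.range k, ((n : ℂ) - (i : ℂ)) = ((n.descFactorial k : ℕ) : ℂ) := by
    rw [Nat.descFactorial_eq_prod_range, Nat.cast_prod]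
    refine Finset.prod_congr rfl fun i hi => ?_
    rw [Nat.cast_sub (le_of_lt (lt_of_lt_of_le (Finset.mem_range.mp hi) hk))]
  have hk0 : (k.factorial : ℂ) ≠ 0 := Nat.cast_ne_zero.mpr k.factorial_ne_zero
  rw [hprod, Nat.descFactorial_eq_factorial_mul_choose]
  push_cast
  field_simp

lemma cchoose_nat_of_gt {n k : ℕ} (hk : n < k) : cchoose (n : ℂ) k = 0 := by
  unfold cchoose
  rw [Finset.prod_eq_zero (Finset.mem_range.mpr hk) (by simp), zero_div]

/-- The twisted p-adic (h,q)-L-function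
`L_{ξ,p,q}^{(h)}(s,t,χ) = (1/((s−1)F)) Σ_{a=1,(a,p)=1}^F χ(a) ⟨a+p*t⟩^{1−s} q^{ha} ξ^a
   Σ_{k≥0} C(1−s,k) (F/(a+p*t))^k B_{k,ξ^F}^{(h)}(q^F)`,
with `⟨x⟩ = w(x)⁻¹ x`, interpolates the generalized twisted (h,q)-Bernoulli polynomials:
`L_{ξ,p,q}^{(h)}(1−n,t,χ) = −(B_{n,χₙ,ξ}^{(h)}(p*t,q) − χₙ(p) p^{n−1} B_{n,χₙ,ξ^p}^{(h)}(p^{−1}p*t,q^p))/n`,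
where `χₙ = χ w^{−n}`, `B_{n,ξ^F}^{(h)}(x,q^F) = Σ_{k≤n} C(n,k) x^{n−k} B_k`, and the
`B_{n,χₙ}` are given by their distribution relations over the moduli `F` and `F' = F/p`. -/
theorem padic_twisted_hq_L_at_neg_integers
    (p : ℕ) (hp : p.Prime) (h n : ℕ) (hh : 0 < h) (hn : 1 ≤ n)
    (F' : ℕ) (hF' : 0 < F') (F : ℕ) (hF : F = p * F')
    (pstar : ℕ) (hps : pstar = if p = 2 then 4 else p) (hpsF : pstar ∣ F)
    (q ξ t : ℂ) (w χ : ℕ → ℂ)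
    (ht : ∀ a : ℕ, 0 < a → (a : ℂ) + (pstar : ℂ) * t ≠ 0)
    (χn : ℕ → ℂ) (hχn : ∀ a : ℕ, χn a = χ a * ((w a)⁻¹) ^ n)
    (hmult : ∀ b : ℕ, χn (p * b) = χn p * χn b)
    (B : ℕ → ℂ) (Bpoly : ℂ → ℂ)
    (hBpoly : ∀ x : ℂ, Bpoly x =
      ∑ k ∈ Finset.range (n + 1), (n.choose k : ℂ) * x ^ (n - k) * B k)
    (Bχn Bχnp : ℂ → ℂ)
    (hBχn : ∀ z : ℂ, Bχn z = (F : ℂ) ^ (n - 1) *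
      ∑ a ∈ Finset.Icc 1 F, χn a * ξ ^ a * q ^ (h * a) * Bpoly (((a : ℂ) + z) / (F : ℂ)))
    (hBχnp : ∀ z : ℂ, Bχnp z = (F' : ℂ) ^ (n - 1) *
      ∑ b ∈ Finset.Icc 1 F', χn b * (ξ ^ p) ^ b * (q ^ p) ^ (h * b) *
        Bpoly (((b : ℂ) + z) / (F' : ℂ)))
    (L : ℂ → ℂ)
    (hL : ∀ s : ℂ, L s = 1 / ((s - 1) * (F : ℂ)) *
      ∑ a ∈ (Finset.Icc 1 F).filter (fun a => ¬ p ∣ a),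
        χ a * ((w a)⁻¹ * ((a : ℂ) + (pstar : ℂ) * t)) ^ ((1 : ℂ) - s) *
          q ^ (h * a) * ξ ^ a *
          ∑' k : ℕ, cchoose ((1 : ℂ) - s) k *
            ((F : ℂ) / ((a : ℂ) + (pstar : ℂ) * t)) ^ k * B k) :
    L ((1 : ℂ) - n) =
      -(Bχn ((pstar : ℂ) * t) - χn p * (p : ℂ) ^ (n - 1) *
          Bχnp ((pstar : ℂ) * t / (p : ℂ))) / (n : ℂ) := by
  have hppos := hp.pos
  have hp0 : (p : ℂ) ≠ 0 := Nat.cast_ne_zero.mpr hppos.ne'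
  have hF'0 : (F' : ℂ) ≠ 0 := Nat.cast_ne_zero.mpr hF'.ne'
  have hFpos : 0 < F := by rw [hF]; exact Nat.mul_pos hppos hF'
  have hF0 : (F : ℂ) ≠ 0 := Nat.cast_ne_zero.mpr hFpos.ne'
  have hn0 : (n : ℂ) ≠ 0 := Nat.cast_ne_zero.mpr (by omega)
  set c : ℂ := (pstar : ℂ) * t with hc
  set S : ℂ := ∑ a ∈ (Finset.Icc 1 F).filter (fun a => ¬ p ∣ a),
      χn a * ξ ^ a * q ^ (h * a) * Bpoly (((a : ℂ) + c) / (F : ℂ)) with hS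
  -- Claim A : L (1-n) = -( F^{n-1} * S / n )
  have claimA : L ((1 : ℂ) - n) = -(((F : ℂ) ^ (n - 1) * S) / (n : ℂ)) := by
    rw [hL]
    rw [show (1 : ℂ) - ((1 : ℂ) - (n : ℂ)) = (n : ℂ) from by ring]
    have hterm : ∀ a ∈ (Finset.Icc 1 F).filter (fun a => ¬ p ∣ a),
        χ a * ((w a)⁻¹ * ((a : ℂ) + c)) ^ ((n : ℕ) : ℂ) * q ^ (h * a) * ξ ^ a *
          (∑' k : ℕ, cchoose ((n : ℕ) : ℂ) k * ((F : ℂ) / ((a : ℂ) + c)) ^ k * B k)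
        = (F : ℂ) ^ n * (χn a * ξ ^ a * q ^ (h * a) * Bpoly (((a : ℂ) + c) / (F : ℂ))) := by
      intro a ha
      rw [Finset.mem_filter, Finset.mem_Icc] at ha
      have ha0 : (a : ℂ) + c ≠ 0 := ht a (by omega)
      have htsum : (∑' k : ℕ, cchoose ((n : ℕ) : ℂ) k * ((F : ℂ) / ((a : ℂ) + c)) ^ k * B k)
          = ∑ k ∈ Finset.range (n + 1),
              (n.choose k : ℂ) * ((F : ℂ) / ((a : ℂ) + c)) ^ k * B k := by
        rw [tsum_eq_sum (s := Finset.range (n + 1)) ?_]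
        · exact Finset.sum_congr rfl fun k hk => by
            rw [cchoose_nat_of_le (Nat.lt_succ_iff.mp (Finset.mem_range.mp hk))]
        · intro k hk
          have hnk : n < k := by
            rcases Nat.lt_or_ge n k with h' | h'
            · exact h'
            · exact absurd (Finset.mem_range.mpr (by omega)) hk
          rw [cchoose_nat_of_gt hnk, zero_mul, zero_mul]
      rw [htsum, Complex.cpow_natCast, hBpoly, hχn, mul_pow]
      simp only [Finset.mul_sum]
      refine Finset.sum_congr rfl fun k hk => ?_
      have hk' : k ≤ n := Nat.lt_succ_iff.mp (Finset.mem_range.mp hk)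
      have h1 : n - k + k = n := Nat.sub_add_cancel hk'
      have key : ((a : ℂ) + c) ^ n * ((F : ℂ) / ((a : ℂ) + c)) ^ k
          = (F : ℂ) ^ n * (((a : ℂ) + c) / (F : ℂ)) ^ (n - k) := by
        have e1 : ((a : ℂ) + c) ^ n = ((a : ℂ) + c) ^ (n - k) * ((a : ℂ) + c) ^ k := by
          rw [← pow_add, h1]
        have e2 : ((F : ℂ)) ^ n = (F : ℂ) ^ (n - k) * (F : ℂ) ^ k := by
          rw [← pow_add, h1]
        rw [div_pow, div_pow, e1, e2]
        field_simp
      linear_combination (χ a * ((w a)⁻¹) ^ n * q ^ (h * a) * ξ ^ a *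
        (n.choose k : ℂ) * B k) * key
    rw [Finset.sum_congr rfl hterm, ← Finset.mul_sum, ← hS]
    have hFn : (F : ℂ) ^ n = (F : ℂ) * (F : ℂ) ^ (n - 1) := by
      rw [← pow_succ']
      congr 1
      omega
    rw [show (1 : ℂ) - (n : ℂ) - 1 = -(n : ℂ) from by ring, hFn]
    field_simp
  -- Claim B : Bχn c - χn p * p^{n-1} * Bχnp (c/p) = F^{n-1} * S
  have hinj : ∀ x ∈ Finset.Icc 1 F', ∀ y ∈ Finset.Icc 1 F', p * x = p * y → x = y :=
    fun x _ y _ hxy => Nat.eq_of_mul_eq_mul_left hppos hxy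
  have hmap : (Finset.Icc 1 F).filter (fun a => p ∣ a)
      = (Finset.Icc 1 F').image (fun b => p * b) := by
    ext a
    simp only [Finset.mem_filter, Finset.mem_Icc, Finset.mem_image]
    constructor
    · rintro ⟨⟨h1, h2⟩, b, rfl⟩
      have hb0 : b ≠ 0 := by rintro rfl; simp at h1
      refine ⟨b, ⟨Nat.one_le_iff_ne_zero.mpr hb0, ?_⟩, rfl⟩
      rw [hF] at h2
      exact Nat.le_of_mul_le_mul_left h2 hppos
    · rintro ⟨b, ⟨h1, h2⟩, rfl⟩
      refine ⟨⟨?_, ?_⟩, b, rfl⟩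
      · exact Nat.one_le_iff_ne_zero.mpr (Nat.mul_ne_zero hppos.ne' (by omega))
      · rw [hF]; exact Nat.mul_le_mul_left p h2
  have hsplit : (∑ a ∈ Finset.Icc 1 F, χn a * ξ ^ a * q ^ (h * a) *
        Bpoly (((a : ℂ) + c) / (F : ℂ)))
      = (∑ b ∈ Finset.Icc 1 F', (χn p * χn b) * (ξ ^ p) ^ b * (q ^ p) ^ (h * b) *
          Bpoly (((b : ℂ) + c / (p : ℂ)) / (F' : ℂ))) + S := by
    rw [← Finset.sum_filter_add_sum_filter_not (Finset.Icc 1 F) (fun a => p ∣ a)]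
    congr 1
    rw [hmap, Finset.sum_image hinj]
    refine Finset.sum_congr rfl fun b hb => ?_
    have harg : (((p * b : ℕ) : ℂ) + c) / (F : ℂ)
        = ((b : ℂ) + c / (p : ℂ)) / (F' : ℂ) := by
      rw [hF]
      push_cast
      field_simp
    rw [hmult b, pow_mul ξ p b, show h * (p * b) = p * (h * b) from by ring,
      pow_mul q p (h * b), harg]
  have hFpow : (F : ℂ) ^ (n - 1) = (p : ℂ) ^ (n - 1) * (F' : ℂ) ^ (n - 1) := by
    rw [hF]
    push_cast
    rw [mul_pow]
  have hT : (∑ b ∈ Finset.Icc 1 F', (χn p * χn b) * (ξ ^ p) ^ b * (q ^ p) ^ (h * b) *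
        Bpoly (((b : ℂ) + c / (p : ℂ)) / (F' : ℂ)))
      = χn p * ∑ b ∈ Finset.Icc 1 F', χn b * (ξ ^ p) ^ b * (q ^ p) ^ (h * b) *
          Bpoly (((b : ℂ) + c / (p : ℂ)) / (F' : ℂ)) := by
    rw [Finset.mul_sum]
    exact Finset.sum_congr rfl fun b _ => by ring
  have claimB : Bχn c - χn p * (p : ℂ) ^ (n - 1) * Bχnp (c / (p : ℂ))
      = (F : ℂ) ^ (n - 1) * S := by
    rw [hBχn, hBχnp, hsplit, hT, hFpow]
    ring
  rw [claimA, claimB, neg_div]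
end
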